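/- Let X be a sober topological space with countable open set lattice such that (X, ≥), the dual of the specialization order, is a dcpo. Then the open set lattice O(X) is a continuous lattice if and only if (X, ≥) is a quasicontinuous dcpo. -/

import Mathlib

open Set

section RelDefs
variable {α : Type*} (r : α → α → Prop)

/-- `D` is a (nonempty) directed subset with respect to the relation `r`. -/
def DirOn (D : Set α) : Prop :=
  D.Nonempty ∧ ∀ a ∈ D, ∀ b ∈ D, ∃ c ∈ D, r a c ∧ r b c

/-- `s` is a least upper bound of `D` with respect to `r`. -/
def IsLubR (D : Set α) (s : α) : Prop :=
  (∀ d ∈ D, r d s) ∧ ∀ u, (∀ d ∈ D, r d u) → r s u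

/-- `x` is way-below `y` with respect to `r`. -/
def WB (x y : α) : Prop :=
  ∀ D : Set α, DirOn r D → ∀ s, IsLubR r D s → r y s → ∃ d ∈ D, r x d

/-- Every directed subset has a least upper bound (dcpo property). -/
def DcpoRel : Prop := ∀ D : Set α, DirOn r D → ∃ s, IsLubR r D s

/-- Continuity: every element is the directed least upper bound of the elements way-below it. -/
def ContinuousRel : Prop :=
  ∀ y, DirOn r {x | WB r x y} ∧ IsLubR r {x | WB r x y} y

/-- Algebraicity: every element is the directed least upper bound of
the compact elements (`WB r x x`) below it. -/
def AlgebraicRel : Prop :=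
  ∀ y, DirOn r {x | WB r x x ∧ r x y} ∧ IsLubR r {x | WB r x x ∧ r x y} y

/-- Upper set generated by `F` with respect to `r`. -/
def UpS (F : Set α) : Set α := {x | ∃ f ∈ F, r f x}

/-- The set `F` is way-below the set `G` with respect to `r`. -/
def SetWB (F G : Set α) : Prop :=
  ∀ D : Set α, DirOn r D → ∀ s, IsLubR r D s → s ∈ UpS r G → ∃ d ∈ D, d ∈ UpS r F

/-- Finite sets way-below `x`. -/
def FinFam (x : α) : Set (Finset α) := {F | SetWB r (F : Set α) {x}}

/-- Finite sets `F` with `F ≪ F ≪ x`. -/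
def FinFamC (x : α) : Set (Finset α) :=
  {F | SetWB r (F : Set α) (F : Set α) ∧ SetWB r (F : Set α) {x}}

/-- Directedness of a family of finite sets in the Smyth preorder
(`F ⊑ G` iff `G ⊆ ↑F`). -/
def SmythDirected (S : Set (Finset α)) : Prop :=
  S.Nonempty ∧ ∀ F ∈ S, ∀ G ∈ S, ∃ H ∈ S,
    (H : Set α) ⊆ UpS r (F : Set α) ∧ (H : Set α) ⊆ UpS r (G : Set α)

/-- Quasicontinuity with respect to `r`. -/
def QuasicontinuousRel : Prop :=
  ∀ x, SmythDirected r (FinFam r x) ∧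
    UpS r {x} = ⋂ F ∈ FinFam r x, UpS r (F : Set α)

/-- Quasialgebraicity with respect to `r`. -/
def QuasialgebraicRel : Prop :=
  ∀ x, SmythDirected r (FinFamC r x) ∧
    UpS r {x} = ⋂ F ∈ FinFamC r x, UpS r (F : Set α)

/-- `U` is Scott open with respect to `r`: an upper set inaccessible by
least upper bounds of directed sets. -/
def IsScottOpenRel (U : Set α) : Prop :=
  (∀ x ∈ U, ∀ y, r x y → y ∈ U) ∧
    ∀ D : Set α, DirOn r D → ∀ s, IsLubR r D s → s ∈ U → ∃ d ∈ D, d ∈ U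

end RelDefs

section Spec
variable {X : Type*} [TopologicalSpace X]

/-- The specialization order: `x ≤ y` iff `x ∈ cl {y}`. -/
def sle (x y : X) : Prop := x ∈ closure ({y} : Set X)

/-- The maximal elements of `C` with respect to the specialization order. -/
def maxSpec (C : Set X) : Set X := {c | c ∈ C ∧ ∀ y ∈ C, sle c y → sle y c}

end Spec

section Basic
variable {X : Type*} [TopologicalSpace X]

/-- The dual specialization relation used in the theorem. -/
abbrev rS : X → X → Prop := fun x y => sle y x

lemma rS_iff {x y : X} : rS x y ↔ ∀ U : Set X, IsOpen U → y ∈ U → x ∈ U := by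
  show sle y x ↔ _
  rw [sle, ← specializes_iff_mem_closure, specializes_iff_forall_open]

lemma rS_refl (x : X) : rS x x := subset_closure rfl

lemma rS_trans {x y z : X} (h1 : rS x y) (h2 : rS y z) : rS x z := by
  rw [rS_iff] at *
  exact fun U hU hz => h1 U hU (h2 U hU hz)

lemma rS_antisymm [T0Space X] {x y : X} (h1 : rS x y) (h2 : rS y x) : x = y := by
  have hs1 : x ⤳ y := specializes_iff_mem_closure.2 h1
  have hs2 : y ⤳ x := specializes_iff_mem_closure.2 h2
  exact (hs1.antisymm hs2).eq

lemma mem_closure_singleton_iff_rS {x y : X} : y ∈ closure ({x} : Set X) ↔ rS x y := Iff.rfl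

lemma upS_singleton (x : X) : UpS (rS (X := X)) {x} = closure {x} := by
  ext y
  simp only [UpS, mem_setOf_eq, mem_singleton_iff]
  constructor
  · rintro ⟨f, rfl, h⟩; exact h
  · exact fun h => ⟨x, rfl, h⟩

lemma upS_eq_biUnion (S : Set X) : UpS (rS (X := X)) S = ⋃ f ∈ S, closure {f} := by
  ext y
  simp only [UpS, mem_setOf_eq, mem_iUnion]
  tauto

lemma isClosed_upS_of_finite {S : Set X} (hS : S.Finite) :
    IsClosed (UpS (rS (X := X)) S) := by
  rw [upS_eq_biUnion]
  exact hS.isClosed_biUnion (fun f _ => isClosed_closure)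

lemma IsOpen.rS_mem {U : Set X} (hU : IsOpen U) {x y : X} (h : rS x y) (hy : y ∈ U) : x ∈ U :=
  rS_iff.1 h U hU hy

lemma IsClosed.rS_mem {C : Set X} (hC : IsClosed C) {x y : X} (hx : x ∈ C) (h : rS x y) :
    y ∈ C := by
  have : closure ({x} : Set X) ⊆ C := hC.closure_subset_iff.2 (singleton_subset_iff.2 hx)
  exact this h

lemma IsClosed.upS_subset {C : Set X} (hC : IsClosed C) {S : Set X} (hS : S ⊆ C) :
    UpS (rS (X := X)) S ⊆ C := by
  rintro y ⟨f, hf, h⟩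
  exact hC.rS_mem (hS hf) h

lemma open_inter_closure_nonempty {U S : Set X}
    (hU : IsOpen U) (h : (U ∩ closure S).Nonempty) : (U ∩ S).Nonempty := by
  obtain ⟨x, hxU, hxc⟩ := h
  obtain ⟨y, hy⟩ := mem_closure_iff.1 hxc U hU hxU
  exact ⟨y, hy⟩

/-- For a least upper bound `s` of `D`, the set of upper bounds is `closure {s}`. -/
lemma ubs_eq_closure {D : Set X} {s : X} (hs : IsLubR (rS (X := X)) D s) :
    (⋂ d ∈ D, closure ({d} : Set X)) = closure {s} := by
  ext u
  simp only [mem_iInter]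
  constructor
  · intro h
    exact hs.2 u (fun d hd => h d hd)
  · intro h d hd
    exact rS_trans (hs.1 d hd) h

lemma isLubR_singleton (x : X) : IsLubR (rS (X := X)) {x} x :=
  ⟨fun d hd => by rw [hd]; exact rS_refl x, fun u h => h x rfl⟩

lemma dirOn_singleton (x : X) : DirOn (rS (X := X)) {x} :=
  ⟨⟨x, rfl⟩, fun a ha b hb => ⟨x, rfl, by rw [ha]; exact rS_refl x, by rw [hb]; exact rS_refl x⟩⟩

/-- Closure of a (dually) filtered set is irreducible. -/
lemma isIrreducible_closure_of_filtered {S : Set X} (hne : S.Nonempty)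
    (hf : ∀ a ∈ S, ∀ b ∈ S, ∃ c ∈ S, rS c a ∧ rS c b) : IsIrreducible (closure S) := by
  constructor
  · exact hne.closure
  · intro U V hU hV hUc hVc
    rw [inter_comm] at hUc hVc
    obtain ⟨a, haU, haS⟩ := open_inter_closure_nonempty hU hUc
    obtain ⟨b, hbV, hbS⟩ := open_inter_closure_nonempty hV hVc
    obtain ⟨c, hcS, hca, hcb⟩ := hf a haS b hbS
    exact ⟨c, subset_closure hcS, hU.rS_mem hca haU, hV.rS_mem hcb hbV⟩

lemma exists_generic [QuasiSober X] {C : Set X} (h : IsIrreducible C) (hc : IsClosed C) :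
    ∃ g, closure ({g} : Set X) = C := by
  obtain ⟨x, hx⟩ := QuasiSober.sober h hc
  exact ⟨x, hx⟩

/-- Minimal elements of a set w.r.t. `rS`. -/
def MinR (C : Set X) : Set X := {m | m ∈ C ∧ ∀ y ∈ C, rS y m → y = m}

lemma exists_minR_le [T0Space X] [QuasiSober X] {C : Set X} (hC : IsClosed C) {c : X}
    (hc : c ∈ C) : ∃ m ∈ MinR C, rS m c := by
  -- Zorn downward in the set {y ∈ C | rS y c}
  letI pre : Preorder X :=
    { le := fun a b => rS b a
      le_refl := fun a => rS_refl a
      le_trans := fun a b c h1 h2 => rS_trans h2 h1 }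
  have key := zorn_le_nonempty₀ {y | y ∈ C ∧ rS y c} ?_ c ⟨hc, rS_refl c⟩
  · obtain ⟨m, hcm, hm, hmax⟩ := key
    refine ⟨m, ⟨hm.1, ?_⟩, hcm⟩
    intro y hy hym
    have hmem : y ∈ {y | y ∈ C ∧ rS y c} := ⟨hy, rS_trans hym hm.2⟩
    have h2 : rS m y := hmax hmem hym
    exact rS_antisymm hym h2
  · intro ch hch hchain y hy
    have hne : ch.Nonempty := ⟨y, hy⟩
    have hfil : ∀ a ∈ ch, ∀ b ∈ ch, ∃ d ∈ ch, rS d a ∧ rS d b := by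
      intro a ha b hb
      rcases eq_or_ne a b with rfl | hab
      · exact ⟨a, ha, rS_refl a, rS_refl a⟩
      rcases hchain ha hb hab with h | h
      · exact ⟨b, hb, (h : rS b a), rS_refl b⟩
      · exact ⟨a, ha, rS_refl a, (h : rS a b)⟩
    have hirr := isIrreducible_closure_of_filtered hne hfil
    obtain ⟨g, hg⟩ := exists_generic hirr isClosed_closure
    have hgch : ∀ a ∈ ch, rS g a := by
      intro a ha
      have : a ∈ closure ({g} : Set X) := hg.symm ▸ subset_closure ha
      exact this
    have hgC : g ∈ C := by
      have h1 : closure ({g} : Set X) ⊆ C := by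
        rw [hg]
        exact hC.closure_subset_iff.2 (fun z hz => (hch hz).1)
      exact h1 (rS_refl g)
    have hgc : rS g c := rS_trans (hgch y hy) (hch hy).2
    exact ⟨g, ⟨hgC, hgc⟩, fun z hz => hgch z hz⟩

lemma closed_eq_upS_minR [T0Space X] [QuasiSober X] {C : Set X} (hC : IsClosed C) :
    C = UpS (rS (X := X)) (MinR C) := by
  apply Subset.antisymm
  · intro c hc
    obtain ⟨m, hm, hmc⟩ := exists_minR_le hC hc
    exact ⟨m, hm, hmc⟩
  · exact hC.upS_subset (fun m hm => hm.1)

lemma minR_antichain [T0Space X] {C : Set X} {a b : X} (ha : a ∈ MinR C) (hb : b ∈ MinR C)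
    (hab : a ≠ b) : ¬ rS a b := fun h => hab (hb.2 a ha.1 h)

end Basic
section Combinatorial
variable {X : Type*} [TopologicalSpace X]

lemma closeds_countable (hcnt : {U : Set X | IsOpen U}.Countable) :
    {C : Set X | IsClosed C}.Countable := by
  have : {C : Set X | IsClosed C} = compl '' {U : Set X | IsOpen U} := by
    ext C
    simp only [mem_setOf_eq, mem_image]
    constructor
    · intro h; exact ⟨Cᶜ, h.isOpen_compl, compl_compl C⟩
    · rintro ⟨U, hU, rfl⟩; exact hU.isClosed_compl
  rw [this]
  exact hcnt.image _

lemma tail_infinite {I : Set ℕ} (hI : I.Infinite) (n : ℕ) : {i | i ∈ I ∧ n ≤ i}.Infinite := by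
  have : {i | i ∈ I ∧ n ≤ i} = I \ {i | i < n} := by
    ext i; simp only [mem_setOf_eq, mem_diff, not_lt]
  rw [this]
  exact hI.diff (Set.finite_Iio n)

/-- The "limit set" of a subsequence indexed by `I`. -/
def Lam (q : ℕ → X) (I : Set ℕ) : Set X := ⋂ n, closure (q '' {i | i ∈ I ∧ n ≤ i})

lemma Lam_isClosed (q : ℕ → X) (I : Set ℕ) : IsClosed (Lam q I) :=
  isClosed_iInter (fun _ => isClosed_closure)

lemma Lam_mono (q : ℕ → X) {I J : Set ℕ} (h : I ⊆ J) : Lam q I ⊆ Lam q J := by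
  apply Set.iInter_mono
  intro n
  exact closure_mono (image_mono (fun i hi => ⟨h hi.1, hi.2⟩))

lemma Lam_subset_closure_tail (q : ℕ → X) (I : Set ℕ) (n : ℕ) :
    Lam q I ⊆ closure (q '' {i | i ∈ I ∧ n ≤ i}) := Set.iInter_subset _ n

lemma Lam_tail (q : ℕ → X) (I : Set ℕ) (n₀ : ℕ) :
    Lam q {i | i ∈ I ∧ n₀ ≤ i} = Lam q I := by
  apply Subset.antisymm
  · exact Lam_mono q (fun i hi => hi.1)
  · intro x hx
    apply Set.mem_iInter.2
    intro n
    have h1 : {i | i ∈ I ∧ max n₀ n ≤ i} ⊆ {i | (i ∈ {i | i ∈ I ∧ n₀ ≤ i}) ∧ n ≤ i} := by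
      intro i hi
      exact ⟨⟨hi.1, le_trans (le_max_left _ _) hi.2⟩, le_trans (le_max_right _ _) hi.2⟩
    have h2 := Set.mem_iInter.1 hx (max n₀ n)
    exact closure_mono (image_mono h1) h2

/-- Stabilization of the limit-set operator along a subsequence. -/
lemma exists_lam_stable (hcnt : {U : Set X | IsOpen U}.Countable) (q : ℕ → X)
    (J₀ : Set ℕ) (hJ₀ : J₀.Infinite) :
    ∃ J, J ⊆ J₀ ∧ J.Infinite ∧ ∀ I, I ⊆ J → I.Infinite → Lam q I = Lam q J := by
  classical
  obtain ⟨D, hD⟩ := (closeds_countable hcnt).exists_eq_range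
    ⟨univ, isClosed_univ⟩
  -- pools
  let step : ℕ → {J : Set ℕ // J.Infinite ∧ J ⊆ J₀} → {J : Set ℕ // J.Infinite ∧ J ⊆ J₀} :=
    fun k p =>
      if h : ∃ J, J ⊆ p.1 ∧ J.Infinite ∧ Lam q J ⊆ D k then
        ⟨h.choose, h.choose_spec.2.1, h.choose_spec.1.trans p.2.2⟩
      else p
  let P : ℕ → {J : Set ℕ // J.Infinite ∧ J ⊆ J₀} :=
    fun k => Nat.rec ⟨J₀, hJ₀, Subset.rfl⟩ step k
  have hPsucc : ∀ k, (P (k + 1)).1 ⊆ (P k).1 := by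
    intro k
    show (step k (P k)).1 ⊆ (P k).1
    by_cases h : ∃ J, J ⊆ (P k).1 ∧ J.Infinite ∧ Lam q J ⊆ D k
    · simp only [step, dif_pos h]
      exact h.choose_spec.1
    · simp only [step, dif_neg h]
      exact Subset.rfl
  have hPmono : ∀ k m, k ≤ m → (P m).1 ⊆ (P k).1 := by
    intro k m hkm
    induction m with
    | zero => rw [Nat.le_zero.1 hkm]
    | succ m ih =>
      rcases Nat.lt_or_ge k (m+1) with h | h
      · exact (hPsucc m).trans (ih (Nat.lt_succ_iff.1 h))
      · rw [Nat.le_antisymm hkm h]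
  have hPtrig : ∀ k, (∃ J, J ⊆ (P k).1 ∧ J.Infinite ∧ Lam q J ⊆ D k) →
      Lam q (P (k+1)).1 ⊆ D k := by
    intro k h
    show Lam q (step k (P k)).1 ⊆ D k
    simp only [step, dif_pos h]
    exact h.choose_spec.2.2
  -- diagonal
  let diag : ℕ → ℕ := fun k => Nat.rec ((P 0).2.1.nonempty.choose)
    (fun k prev => ((P (k+1)).2.1.exists_gt prev).choose) k
  have hdiag_mem : ∀ k, diag k ∈ (P k).1 := by
    intro k
    cases k with
    | zero => exact (P 0).2.1.nonempty.choose_spec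
    | succ k => exact ((P (k+1)).2.1.exists_gt (diag k)).choose_spec.1
  have hdiag_lt : ∀ k, diag k < diag (k+1) := by
    intro k
    exact ((P (k+1)).2.1.exists_gt (diag k)).choose_spec.2
  have hdiag_mono : StrictMono diag := strictMono_nat_of_lt_succ hdiag_lt
  refine ⟨range diag, ?_, ?_, ?_⟩
  · rintro _ ⟨k, rfl⟩
    exact (P k).2.2 (hdiag_mem k)
  · exact infinite_range_of_injective hdiag_mono.injective
  · intro I hI hIinf
    have htail : ∀ k, {i | i ∈ range diag ∧ diag k ≤ i} ⊆ (P k).1 := by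
      rintro k i ⟨⟨m, rfl⟩, hle⟩
      have : k ≤ m := by
        by_contra hc
        push_neg at hc
        exact absurd (hdiag_mono hc) (not_lt.2 hle)
      exact hPmono k m this (hdiag_mem m)
    apply Subset.antisymm (Lam_mono q hI)
    -- Lam q (range diag) ⊆ Lam q I
    obtain ⟨k, hk⟩ : ∃ k, D k = Lam q I := by
      have : Lam q I ∈ {C : Set X | IsClosed C} := Lam_isClosed q I
      rw [hD] at this
      obtain ⟨k, hk⟩ := this
      exact ⟨k, hk⟩
    have htrig := hPtrig k ⟨{i | i ∈ I ∧ diag k ≤ i}, ?_, ?_, ?_⟩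
    · calc Lam q (range diag) = Lam q {i | i ∈ range diag ∧ diag (k+1) ≤ i} :=
            (Lam_tail q _ _).symm
        _ ⊆ Lam q (P (k+1)).1 := Lam_mono q (htail (k+1))
        _ ⊆ D k := htrig
        _ = Lam q I := hk
    · intro i hi
      exact htail k ⟨hI hi.1, hi.2⟩
    · exact tail_infinite hIinf _
    · rw [Lam_tail q I (diag k), hk]

end Combinatorial
section AllInf
variable {X : Type*} [TopologicalSpace X]

/-- Key extraction: from an antichain sequence one can extract a subsequence on which
every open set has empty or infinite trace. -/
lemma exists_allinf (hcnt : {U : Set X | IsOpen U}.Countable) (q : ℕ → X)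
    (hanti : ∀ i j : ℕ, i ≠ j → ¬ rS (q i) (q j))
    (J₀ : Set ℕ) (hJ₀ : J₀.Infinite) :
    ∃ J, J ⊆ J₀ ∧ J.Infinite ∧ ∀ U : Set X, IsOpen U →
      {i | i ∈ J ∧ q i ∈ U}.Infinite ∨ ∀ i ∈ J, q i ∉ U := by
  classical
  by_contra hcon
  push_neg at hcon
  -- hcon : for every infinite subpool there is an open with finite nonempty trace
  have hcon' : ∀ J : Set ℕ, J ⊆ J₀ → J.Infinite →
      ∃ U : Set X, IsOpen U ∧ {i | i ∈ J ∧ q i ∈ U}.Finite ∧ ∃ i ∈ J, q i ∈ U := by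
    intro J hJ hJinf
    obtain ⟨U, hU, h1, h2⟩ := hcon J hJ hJinf
    refine ⟨U, hU, h1, ?_⟩
    obtain ⟨i, hi, hqi⟩ := h2
    exact ⟨i, hi, hqi⟩
  -- separating opens
  have hsep : ∀ m j : ℕ, m ≠ j → ∃ O : Set X, IsOpen O ∧ q j ∈ O ∧ q m ∉ O := by
    intro m j hmj
    have h := hanti m j hmj
    rw [rS_iff] at h
    push_neg at h
    obtain ⟨O, hO, hj, hm⟩ := h
    exact ⟨O, hO, hj, hm⟩
  let sepO : ℕ → ℕ → Set X := fun m j =>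
    if h : m ≠ j then (hsep m j h).choose else univ
  have hsepO_open : ∀ m j, IsOpen (sepO m j) := by
    intro m j
    by_cases h : m ≠ j
    · simp only [sepO, dif_pos h]; exact (hsep m j h).choose_spec.1
    · simp only [sepO, dif_neg h]; exact isOpen_univ
  have hsepO_mem : ∀ m j, q j ∈ sepO m j := by
    intro m j
    by_cases h : m ≠ j
    · simp only [sepO, dif_pos h]; exact (hsep m j h).choose_spec.2.1
    · simp only [sepO, dif_neg h]; exact mem_univ _
  have hsepO_not : ∀ m j, m ≠ j → q m ∉ sepO m j := by
    intro m j h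
    simp only [sepO, dif_pos h]
    exact (hsep m j h).choose_spec.2.2
  -- the invariant
  let Inv : Set ℕ × List ℕ → Prop := fun σ =>
    σ.1.Infinite ∧ σ.1 ⊆ J₀ ∧ ∀ m ∈ σ.2, m ∉ σ.1
  have stepEx : ∀ σ : Set ℕ × List ℕ, Inv σ → ∃ τ : (Set X × ℕ) × (Set ℕ × List ℕ),
      IsOpen τ.1.1 ∧ q τ.1.2 ∈ τ.1.1 ∧ τ.1.2 ∈ σ.1 ∧ (∀ m ∈ σ.2, q m ∉ τ.1.1) ∧
      τ.2.1 = σ.1 \ {i | i ∈ σ.1 ∧ q i ∈ τ.1.1} ∧ τ.2.2 = σ.2 ++ [τ.1.2] ∧ Inv τ.2 := by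
    rintro ⟨J, ms⟩ ⟨hJinf, hJsub, hms⟩
    obtain ⟨U, hU, hfin, j, hjJ, hjU⟩ := hcon' J hJsub hJinf
    set A : Set X := U ∩ ⋂ m ∈ ms.toFinset, sepO m j with hA
    have hAopen : IsOpen A := hU.inter (isOpen_biInter_finset (fun m _ => hsepO_open m j))
    have hjA : q j ∈ A := by
      refine ⟨hjU, ?_⟩
      apply Set.mem_biInter
      intro m _
      exact hsepO_mem m j
    have hmsA : ∀ m ∈ ms, q m ∉ A := by
      intro m hm hqm
      have hmj : m ≠ j := fun h => (h ▸ hms m hm) hjJ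
      have : q m ∈ sepO m j := by
        have := hqm.2
        rw [Set.mem_iInter₂] at this
        exact this m (List.mem_toFinset.2 hm)
      exact hsepO_not m j hmj this
    have htrA : {i | i ∈ J ∧ q i ∈ A}.Finite :=
      hfin.subset (fun i hi => ⟨hi.1, hi.2.1⟩)
    refine ⟨((A, j), (J \ {i | i ∈ J ∧ q i ∈ A}, ms ++ [j])), hAopen, hjA, hjJ, hmsA,
      rfl, rfl, ?_, ?_, ?_⟩
    · exact hJinf.diff htrA
    · exact (diff_subset).trans hJsub
    · intro m hm
      rcases List.mem_append.1 hm with h | h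
      · exact fun hc => hms m h hc.1
      · have : m = j := by simpa using h
        subst this
        exact fun hc => hc.2 ⟨hjJ, hjA⟩
  -- the recursive construction
  let T : ℕ → {σ : Set ℕ × List ℕ // Inv σ} :=
    fun k => Nat.rec ⟨(J₀, []), hJ₀, Subset.rfl, by simp⟩
      (fun _ ih => ⟨(stepEx ih.1 ih.2).choose.2, (stepEx ih.1 ih.2).choose_spec.2.2.2.2.2.2⟩) k
  let A : ℕ → Set X := fun k => (stepEx (T k).1 (T k).2).choose.1.1
  let t : ℕ → ℕ := fun k => (stepEx (T k).1 (T k).2).choose.1.2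
  have hTsucc : ∀ k, (T (k+1)).1 = (stepEx (T k).1 (T k).2).choose.2 := fun k => rfl
  have hspec : ∀ k, IsOpen (A k) ∧ q (t k) ∈ A k ∧ t k ∈ (T k).1.1 ∧
      (∀ m ∈ (T k).1.2, q m ∉ A k) ∧
      (T (k+1)).1.1 = (T k).1.1 \ {i | i ∈ (T k).1.1 ∧ q i ∈ A k} ∧
      (T (k+1)).1.2 = (T k).1.2 ++ [t k] := by
    intro k
    have h := (stepEx (T k).1 (T k).2).choose_spec
    exact ⟨h.1, h.2.1, h.2.2.1, h.2.2.2.1, by rw [hTsucc k]; exact h.2.2.2.2.1,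
      by rw [hTsucc k]; exact h.2.2.2.2.2.1⟩
  have hJdec : ∀ k m, k ≤ m → (T m).1.1 ⊆ (T k).1.1 := by
    intro k m hkm
    induction m with
    | zero => rw [Nat.le_zero.1 hkm]
    | succ m ih =>
      rcases Nat.lt_or_ge k (m+1) with h | h
      · refine subset_trans ?_ (ih (Nat.lt_succ_iff.1 h))
        rw [(hspec m).2.2.2.2.1]
        exact diff_subset
      · rw [Nat.le_antisymm hkm h]
  have hms_content : ∀ k i, i < k → t i ∈ (T k).1.2 := by
    intro k
    induction k with
    | zero => intro i hi; omega
    | succ k ih =>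
      intro i hi
      rw [(hspec k).2.2.2.2.2]
      rcases Nat.lt_or_ge i k with h | h
      · exact List.mem_append.2 (Or.inl (ih i h))
      · have : i = k := by omega
        subst this
        exact List.mem_append.2 (Or.inr (by simp))
  have hkey : ∀ k m, (q (t k) ∈ A m) ↔ k = m := by
    intro k m
    constructor
    · intro h
      by_contra hne
      rcases Nat.lt_or_ge k m with hlt | hge
      · exact (hspec m).2.2.2.1 (t k) (hms_content m k hlt) h
      · have hmk : m < k := by omega
        have h1 : t k ∈ (T (m+1)).1.1 := hJdec (m+1) k hmk (hspec k).2.2.1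
        rw [(hspec m).2.2.2.2.1] at h1
        have h2 : t k ∈ (T m).1.1 := hJdec m k (le_of_lt hmk) (hspec k).2.2.1
        exact h1.2 ⟨h2, h⟩
    · rintro rfl
      exact (hspec k).2.1
  -- the injection into the (countable) family of open sets
  let Φ : Set ℕ → {U : Set X // IsOpen U} := fun S =>
    ⟨⋃ k ∈ S, A k, isOpen_biUnion (fun k _ => (hspec k).1)⟩
  have hΦmem : ∀ S k, q (t k) ∈ (Φ S).1 ↔ k ∈ S := by
    intro S k
    simp only [Φ, mem_iUnion]
    constructor
    · rintro ⟨m, hm, hqm⟩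
      rwa [(hkey k m).1 hqm]
    · intro h
      exact ⟨k, h, (hspec k).2.1⟩
  have hΦinj : Function.Injective Φ := by
    intro S S' hSS
    ext k
    rw [← hΦmem S k, ← hΦmem S' k, hSS]
  have hOcnt : Countable {U : Set X // IsOpen U} := hcnt.to_subtype
  obtain ⟨f, hf⟩ := exists_injective_nat {U : Set X // IsOpen U}
  exact Function.cantor_injective (f ∘ Φ) (hf.comp hΦinj)

end AllInf
section Engine
variable {X : Type*} [TopologicalSpace X]

/-- The engine: every antichain sequence admits a point `g` below an infinite subsequence,
which moreover lies in all closures of tails of that subsequence. -/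
lemma engine [T0Space X] [QuasiSober X] (hcnt : {U : Set X | IsOpen U}.Countable)
    (q : ℕ → X) (hanti : ∀ i j : ℕ, i ≠ j → ¬ rS (q i) (q j)) :
    ∃ (g : X) (J : Set ℕ), J.Infinite ∧ (∀ i ∈ J, rS g (q i)) ∧
      ∀ n, g ∈ closure (q '' {i | i ∈ J ∧ n ≤ i}) := by
  obtain ⟨J₁, _, hJ₁inf, hstab⟩ := exists_lam_stable hcnt q univ infinite_univ
  obtain ⟨J₂, hsub, hinf, htr⟩ := exists_allinf hcnt q hanti J₁ hJ₁inf
  set E : Set X := Lam q J₂ with hE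
  have htrace_inf : ∀ U : Set X, IsOpen U → (∃ i ∈ J₂, q i ∈ U) →
      {i | i ∈ J₂ ∧ q i ∈ U}.Infinite := by
    intro U hU ⟨i, hi, hqi⟩
    rcases htr U hU with h | h
    · exact h
    · exact absurd hqi (h i hi)
  have hqE : ∀ i ∈ J₂, q i ∈ E := by
    intro i hi
    apply Set.mem_iInter.2
    intro n
    rw [mem_closure_iff]
    intro O hO hqiO
    have hinf' := htrace_inf O hO ⟨i, hi, hqiO⟩
    obtain ⟨i', hi', hlt⟩ := hinf'.exists_gt n
    exact ⟨q i', hi'.2, ⟨i', ⟨hi'.1, le_of_lt hlt⟩, rfl⟩⟩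
  have hEeq : ∀ I, I ⊆ J₂ → I.Infinite → Lam q I = E := by
    intro I hI hIinf
    rw [hE, hstab I (hI.trans hsub) hIinf, hstab J₂ hsub hinf]
  have hEne : E.Nonempty := by
    obtain ⟨i, hi⟩ := hinf.nonempty
    exact ⟨q i, hqE i hi⟩
  have hEirr : IsIrreducible E := by
    refine ⟨hEne, ?_⟩
    intro U V hU hV hEU hEV
    have htrU : {i | i ∈ J₂ ∧ q i ∈ U}.Infinite := by
      obtain ⟨x, hxE, hxU⟩ := hEU
      have hx0 := Set.mem_iInter.1 hxE 0
      obtain ⟨y, hyU, ⟨i, hi, rfl⟩⟩ := mem_closure_iff.1 hx0 U hU hxU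
      exact htrace_inf U hU ⟨i, hi.1, hyU⟩
    have hiUV : ∃ i, i ∈ J₂ ∧ q i ∈ U ∧ q i ∈ V := by
      by_contra hdisj
      push_neg at hdisj
      -- stability: E = Lam of the U-trace
      have hEU' : E = Lam q {i | i ∈ J₂ ∧ q i ∈ U} :=
        (hEeq _ (fun i hi => hi.1) htrU).symm
      obtain ⟨y, hyE, hyV⟩ := hEV
      have hy0 : y ∈ closure (q '' {i | i ∈ {i | i ∈ J₂ ∧ q i ∈ U} ∧ 0 ≤ i}) := by
        have := hEU' ▸ hyE
        exact Set.mem_iInter.1 this 0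
      obtain ⟨z, hzV, ⟨i, hi, rfl⟩⟩ := mem_closure_iff.1 hy0 V hV hyV
      exact hdisj i hi.1.1 hi.1.2 hzV
    obtain ⟨i, hi, hiU, hiV⟩ := hiUV
    exact ⟨q i, hqE i hi, hiU, hiV⟩
  obtain ⟨g, hg⟩ := exists_generic hEirr (Lam_isClosed q J₂)
  refine ⟨g, J₂, hinf, ?_, ?_⟩
  · intro i hi
    have : q i ∈ closure ({g} : Set X) := hg.symm ▸ hqE i hi
    exact this
  · intro n
    have hgE : g ∈ E := hg ▸ subset_closure rfl
    exact Set.mem_iInter.1 hgE n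

end Engine
section Structure
variable {X : Type*} [TopologicalSpace X] [T0Space X] [QuasiSober X]

/-- The structure theorem: in a sober space with countable open set lattice,
every closed set has finitely many minimal elements. -/
lemma minR_finite (hcnt : {U : Set X | IsOpen U}.Countable) {C : Set X} (hC : IsClosed C) :
    (MinR C).Finite := by
  rw [← Set.not_infinite]
  intro hinf
  let e := Set.Infinite.natEmbedding _ hinf
  let q : ℕ → X := fun n => (e n).1
  have hqmem : ∀ n, q n ∈ MinR C := fun n => (e n).2
  have hqinj : Function.Injective q := fun a b h => e.injective (Subtype.ext h)
  have hanti : ∀ i j : ℕ, i ≠ j → ¬ rS (q i) (q j) := by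
    intro i j hij
    exact minR_antichain (hqmem i) (hqmem j) (fun h => hij (hqinj h))
  obtain ⟨g, J, hJinf, hbelow, hcl⟩ := engine hcnt q hanti
  have hgC : g ∈ C := by
    have h0 := hcl 0
    have himg : q '' {i | i ∈ J ∧ 0 ≤ i} ⊆ C := by
      rintro _ ⟨i, _, rfl⟩
      exact (hqmem i).1
    exact (hC.closure_subset_iff.2 himg) h0
  obtain ⟨i, hi⟩ := hJinf.nonempty
  obtain ⟨j, hj, hij⟩ := hJinf.exists_gt i
  have h1 : g = q i := (hqmem i).2 g hgC (hbelow i hi)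
  have h2 : g = q j := (hqmem j).2 g hgC (hbelow j hj)
  exact absurd (hqinj (h1 ▸ h2)) (Nat.ne_of_lt hij)

/-- Decomposition of closed sets: every closed set is the `rS`-up-closure
of a finite set (contained in it). -/
lemma closed_decomp (hcnt : {U : Set X | IsOpen U}.Countable) {C : Set X} (hC : IsClosed C) :
    ∃ F : Finset X, (F : Set X) ⊆ C ∧ C = UpS (rS (X := X)) (F : Set X) := by
  refine ⟨(minR_finite hcnt hC).toFinset, ?_, ?_⟩
  · rw [Set.Finite.coe_toFinset]
    exact fun m hm => hm.1
  · rw [Set.Finite.coe_toFinset]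
    exact closed_eq_upS_minR hC

end Structure

section Lattice
variable {X : Type*} [TopologicalSpace X]

/-- The subtype of open sets. -/
abbrev Opn (X : Type*) [TopologicalSpace X] := {U : Set X // IsOpen U}

/-- The inclusion relation on open sets. -/
abbrev lE : Opn X → Opn X → Prop := fun U V => U.1 ⊆ V.1

lemma dirOn_singleton_lE (V : Opn X) : DirOn (lE (X := X)) {V} :=
  ⟨⟨V, rfl⟩, fun a ha b hb => ⟨V, rfl, by rw [ha], by rw [hb]⟩⟩

lemma isLubR_singleton_lE (V : Opn X) : IsLubR (lE (X := X)) {V} V :=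
  ⟨fun d hd => by rw [hd], fun u hu => hu V rfl⟩

lemma wb_subset {U V : Opn X} (h : WB (lE (X := X)) U V) : U.1 ⊆ V.1 := by
  obtain ⟨d, hd, hUd⟩ := h {V} (dirOn_singleton_lE V) V (isLubR_singleton_lE V) Subset.rfl
  rw [mem_singleton_iff] at hd
  rwa [hd] at hUd

lemma dirOn_wbset (V : Opn X) : DirOn (lE (X := X)) {U : Opn X | WB (lE (X := X)) U V} := by
  constructor
  · refine ⟨⟨∅, isOpen_empty⟩, ?_⟩
    intro D hD s _ _
    obtain ⟨d, hd⟩ := hD.1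
    exact ⟨d, hd, empty_subset _⟩
  · intro U₁ hU₁ U₂ hU₂
    refine ⟨⟨U₁.1 ∪ U₂.1, U₁.2.union U₂.2⟩, ?_, subset_union_left, subset_union_right⟩
    intro D hD s hs hVs
    obtain ⟨d₁, hd₁, h₁⟩ := hU₁ D hD s hs hVs
    obtain ⟨d₂, hd₂, h₂⟩ := hU₂ D hD s hs hVs
    obtain ⟨d, hd, hd₁d, hd₂d⟩ := hD.2 d₁ hd₁ d₂ hd₂
    exact ⟨d, hd, union_subset (h₁.trans hd₁d) (h₂.trans hd₂d)⟩

lemma isLubR_eq_union {D : Set (Opn X)} {s : Opn X} (hs : IsLubR (lE (X := X)) D s) :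
    s.1 = ⋃ d ∈ D, (d : Opn X).1 := by
  apply Subset.antisymm
  · exact hs.2 ⟨⋃ d ∈ D, (d : Opn X).1, isOpen_biUnion (fun d _ => d.2)⟩
      (fun d hd => subset_biUnion_of_mem hd)
  · exact iUnion₂_subset (fun d hd => hs.1 d hd)

lemma wb_elim {U V : Opn X} (h : WB (lE (X := X)) U V) (C : ℕ → Set X)
    (hCc : ∀ n, IsClosed (C n)) (hCd : ∀ n, C (n + 1) ⊆ C n)
    (hCV : (⋂ n, C n) ⊆ V.1ᶜ) : ∃ n, C n ∩ U.1 = ∅ := by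
  have hmono : ∀ m n, m ≤ n → C n ⊆ C m := fun m n hmn => antitone_nat_of_succ_le hCd hmn
  set D : Set (Opn X) := range (fun n => (⟨(C n)ᶜ, (hCc n).isOpen_compl⟩ : Opn X)) with hDdef
  have hD : DirOn (lE (X := X)) D := by
    constructor
    · exact ⟨_, mem_range_self 0⟩
    · rintro a ⟨n, rfl⟩ b ⟨m, rfl⟩
      refine ⟨_, mem_range_self (max n m), ?_, ?_⟩
      · exact compl_subset_compl.2 (hmono n _ (le_max_left n m))
      · exact compl_subset_compl.2 (hmono m _ (le_max_right n m))
  set s : Opn X := ⟨(⋂ n, C n)ᶜ, (isClosed_iInter hCc).isOpen_compl⟩ with hsdef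
  have hlub : IsLubR (lE (X := X)) D s := by
    constructor
    · rintro d ⟨n, rfl⟩
      exact compl_subset_compl.2 (Set.iInter_subset C n)
    · intro u hu
      show (⋂ n, C n)ᶜ ⊆ u.1
      rw [Set.compl_iInter]
      exact iUnion_subset (fun n => hu _ (mem_range_self n))
  have hVs : V.1 ⊆ s.1 := Set.subset_compl_comm.1 hCV
  obtain ⟨d, ⟨n, rfl⟩, hUd⟩ := h D hD s hlub hVs
  refine ⟨n, ?_⟩
  rw [Set.eq_empty_iff_forall_notMem]
  rintro x ⟨hx1, hx2⟩
  exact (hUd hx2) hx1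

lemma wb_intro (hcnt : {U : Set X | IsOpen U}.Countable) {U V : Opn X}
    (h : ∀ C : ℕ → Set X, (∀ n, IsClosed (C n)) → (∀ n, C (n + 1) ⊆ C n) →
      (⋂ n, C n) ⊆ V.1ᶜ → ∃ n, C n ∩ U.1 = ∅) : WB (lE (X := X)) U V := by
  intro D hD s hs hVs
  by_contra hno
  push_neg at hno
  have hcntD : D.Countable := by
    have : Countable (Opn X) := hcnt.to_subtype
    exact D.to_countable
  obtain ⟨e, he⟩ := hcntD.exists_eq_range hD.1
  have hein : ∀ n, e n ∈ D := fun n => he ▸ mem_range_self n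
  have hmerge : ∀ (a : {u : Opn X // u ∈ D}) (n : ℕ),
      ∃ c : {u : Opn X // u ∈ D}, a.1.1 ⊆ c.1.1 ∧ (e n).1 ⊆ c.1.1 := by
    intro a n
    obtain ⟨c, hc, h1, h2⟩ := hD.2 a.1 a.2 (e n) (hein n)
    exact ⟨⟨c, hc⟩, h1, h2⟩
  let Y : ℕ → {u : Opn X // u ∈ D} :=
    fun n => Nat.rec ⟨e 0, hein 0⟩ (fun n ih => (hmerge ih (n + 1)).choose) n
  have hY1 : ∀ n, (Y n).1.1 ⊆ (Y (n + 1)).1.1 := fun n => (hmerge (Y n) (n + 1)).choose_spec.1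
  have hY2 : ∀ n, (e n).1 ⊆ (Y n).1.1 := by
    intro n
    cases n with
    | zero => exact Subset.rfl
    | succ n => exact (hmerge (Y n) (n + 1)).choose_spec.2
  have hYmono : ∀ m n, m ≤ n → (Y m).1.1 ⊆ (Y n).1.1 := fun m n hmn =>
    monotone_nat_of_le_succ hY1 hmn
  have hsub : (⋂ n, ((Y n).1.1)ᶜ) ⊆ V.1ᶜ := by
    intro x hx
    simp only [mem_iInter, mem_compl_iff] at hx
    intro hxV
    have hxs : x ∈ s.1 := hVs hxV
    rw [isLubR_eq_union hs] at hxs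
    obtain ⟨d, hd, hxd⟩ := mem_iUnion₂.1 hxs
    obtain ⟨m, rfl⟩ : ∃ m, e m = d := by
      have : d ∈ range e := he ▸ hd
      exact this
    exact hx m (hY2 m hxd)
  obtain ⟨n, hn⟩ := h (fun n => ((Y n).1.1)ᶜ) (fun n => (Y n).1.2.isClosed_compl)
    (fun n => compl_subset_compl.2 (hY1 n)) hsub
  rw [Set.eq_empty_iff_forall_notMem] at hn
  apply hno (Y n).1 (Y n).2
  intro x hx
  by_contra hc
  exact hn x ⟨hc, hx⟩

end Lattice
section DirA
variable {X : Type*} [TopologicalSpace X] [T0Space X] [QuasiSober X]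

lemma mem_upS_trans {S : Set X} {y z : X} (hy : y ∈ UpS (rS (X := X)) S) (h : rS y z) :
    z ∈ UpS (rS (X := X)) S := by
  obtain ⟨f, hf, hfy⟩ := hy
  exact ⟨f, hf, rS_trans hfy h⟩

lemma setWB_self_mem {F : Set X} {x : X} (h : SetWB (rS (X := X)) F {x}) :
    x ∈ UpS (rS (X := X)) F := by
  obtain ⟨d, hd, hdF⟩ := h {x} (dirOn_singleton x) x (isLubR_singleton x) ⟨x, rfl, rS_refl x⟩
  rw [mem_singleton_iff] at hd
  rwa [hd] at hdF

lemma closure_singleton_anti {a b : X} (h : rS a b) :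
    closure ({b} : Set X) ⊆ closure ({a} : Set X) := fun _ hz => rS_trans h hz

lemma dirA (hcnt : {U : Set X | IsOpen U}.Countable)
    (hcont : ContinuousRel (lE (X := X))) : QuasicontinuousRel (rS (X := X)) := by
  intro x
  obtain ⟨F₀, _, hF₀⟩ := closed_decomp hcnt (isClosed_univ (X := X))
  refine ⟨⟨⟨F₀, ?_⟩, ?_⟩, ?_⟩
  -- nonemptiness of FinFam
  · intro D hD s hs hsx
    obtain ⟨d, hd⟩ := hD.1
    refine ⟨d, hd, ?_⟩
    have hmem : d ∈ UpS (rS (X := X)) (F₀ : Set X) := by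
      rw [← hF₀]; exact mem_univ d
    exact hmem
  -- Smyth directedness
  · intro F hF G hG
    have hclosed : IsClosed (UpS (rS (X := X)) (F : Set X) ∩ UpS (rS (X := X)) (G : Set X)) :=
      (isClosed_upS_of_finite F.finite_toSet).inter (isClosed_upS_of_finite G.finite_toSet)
    obtain ⟨H, hHsub, hHeq⟩ := closed_decomp hcnt hclosed
    refine ⟨H, ?_, fun h hh => (hHsub hh).1, fun h hh => (hHsub hh).2⟩
    intro D hD s hs hsx
    obtain ⟨d₁, hd₁, hd₁F⟩ := hF D hD s hs hsx
    obtain ⟨d₂, hd₂, hd₂G⟩ := hG D hD s hs hsx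
    obtain ⟨d, hd, h1, h2⟩ := hD.2 d₁ hd₁ d₂ hd₂
    refine ⟨d, hd, ?_⟩
    have hdm : d ∈ UpS (rS (X := X)) (F : Set X) ∩ UpS (rS (X := X)) (G : Set X) :=
      ⟨mem_upS_trans hd₁F h1, mem_upS_trans hd₂G h2⟩
    rw [hHeq] at hdm
    exact hdm
  -- the intersection formula
  · apply Subset.antisymm
    · intro y hy
      apply Set.mem_iInter₂.2
      intro F hFmem
      have hx : x ∈ UpS (rS (X := X)) (F : Set X) := setWB_self_mem hFmem
      obtain ⟨x', hx', hxx⟩ := hy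
      rw [mem_singleton_iff] at hx'
      subst hx'
      exact mem_upS_trans hx hxx
    · intro y hy
      by_contra hxy
      have hyB : y ∈ (closure ({x} : Set X))ᶜ := by
        rw [upS_singleton] at hxy
        exact hxy
      set B : Opn X := ⟨(closure ({x} : Set X))ᶜ, isClosed_closure.isOpen_compl⟩ with hBdef
      -- y lies in some U way-below B
      have hyU : ∃ U : Opn X, WB (lE (X := X)) U B ∧ y ∈ U.1 := by
        have hsub : B.1 ⊆ ⋃ U ∈ {U : Opn X | WB (lE (X := X)) U B}, (U : Opn X).1 := by
          refine (hcont B).2.2 ⟨⋃ U ∈ {U : Opn X | WB (lE (X := X)) U B}, (U : Opn X).1,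
            isOpen_biUnion (fun U _ => U.2)⟩ ?_
          intro d hd
          exact subset_biUnion_of_mem hd
        obtain ⟨U, hU, hyUm⟩ := mem_iUnion₂.1 (hsub hyB)
        exact ⟨U, hU, hyUm⟩
      obtain ⟨U, hUwb, hyUm⟩ := hyU
      obtain ⟨G, hGsub, hGeq⟩ := closed_decomp hcnt (U.2.isClosed_compl)
      have hGfin : SetWB (rS (X := X)) (G : Set X) {x} := by
        intro D hD s hs hsx
        by_contra hno
        push_neg at hno
        have hdU : ∀ d ∈ D, d ∈ U.1 := by
          intro d hd
          by_contra hc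
          have hmem : d ∈ U.1ᶜ := hc
          rw [hGeq] at hmem
          exact hno d hd hmem
        set Dfam : Set (Opn X) := (fun d : X =>
          (⟨(closure ({d} : Set X))ᶜ, isClosed_closure.isOpen_compl⟩ : Opn X)) '' D with hDfamdef
        have hDfam : DirOn (lE (X := X)) Dfam := by
          constructor
          · obtain ⟨d, hd⟩ := hD.1
            exact ⟨_, mem_image_of_mem _ hd⟩
          · rintro a ⟨d₁, hd₁, rfl⟩ b ⟨d₂, hd₂, rfl⟩
            obtain ⟨d, hd, h1, h2⟩ := hD.2 d₁ hd₁ d₂ hd₂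
            exact ⟨_, mem_image_of_mem _ hd,
              compl_subset_compl.2 (closure_singleton_anti h1),
              compl_subset_compl.2 (closure_singleton_anti h2)⟩
        set sTop : Opn X := ⟨(closure ({s} : Set X))ᶜ, isClosed_closure.isOpen_compl⟩
        have hlubfam : IsLubR (lE (X := X)) Dfam sTop := by
          constructor
          · rintro a ⟨d, hd, rfl⟩
            exact compl_subset_compl.2 (closure_singleton_anti (hs.1 d hd))
          · intro u hu
            show (closure ({s} : Set X))ᶜ ⊆ u.1
            rw [← ubs_eq_closure hs, Set.compl_iInter₂]
            apply Set.iUnion₂_subset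
            intro d hd
            exact hu _ (mem_image_of_mem _ hd)
        have hBs : B.1 ⊆ sTop.1 := by
          apply compl_subset_compl.2
          apply closure_singleton_anti
          obtain ⟨x', hx', hxs⟩ := hsx
          rw [mem_singleton_iff] at hx'
          rwa [hx'] at hxs
        obtain ⟨dm, ⟨d, hd, rfl⟩, hUdm⟩ := hUwb Dfam hDfam sTop hlubfam hBs
        exact (hUdm (hdU d hd)) (rS_refl d)
      have hyG := Set.mem_iInter₂.1 hy G hGfin
      rw [← hGeq] at hyG
      exact hyG hyUm

end DirA
section DirB
variable {X : Type*} [TopologicalSpace X] [T0Space X] [QuasiSober X]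

lemma exists_wb_nbhd (hcnt : {U : Set X | IsOpen U}.Countable)
    (hdcpo : DcpoRel (rS (X := X))) (hq : QuasicontinuousRel (rS (X := X)))
    (V : Opn X) {w : X} (hw : w ∈ V.1) :
    ∃ U : Opn X, w ∈ U.1 ∧ WB (lE (X := X)) U V := by
  classical
  obtain ⟨G, hGsub, hGeq⟩ := closed_decomp hcnt (V.2.isClosed_compl)
  have hchoice : ∀ g : {g : X // g ∈ G}, ∃ F : Finset X,
      SetWB (rS (X := X)) (F : Set X) {g.1} ∧ w ∉ UpS (rS (X := X)) (F : Set X) := by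
    rintro ⟨g, hg⟩
    have hgV : w ∉ UpS (rS (X := X)) {g} := by
      rw [upS_singleton]
      intro hwg
      have hsub : closure ({g} : Set X) ⊆ V.1ᶜ :=
        V.2.isClosed_compl.closure_subset_iff.2 (singleton_subset_iff.2 (hGsub hg))
      exact (hsub hwg) hw
    rw [(hq g).2] at hgV
    by_contra hcon
    push_neg at hcon
    apply hgV
    apply Set.mem_iInter₂.2
    intro F hF
    exact hcon F hF
  choose Ff hFf1 hFf2 using hchoice
  set U : Set X := ⋂ g : {g : X // g ∈ G}, (UpS (rS (X := X)) (Ff g : Set X))ᶜ with hUdef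
  have hUopen : IsOpen U := isOpen_iInter_of_finite
    (fun g => (isClosed_upS_of_finite (Ff g).finite_toSet).isOpen_compl)
  have hwU : w ∈ U := mem_iInter.2 (fun g => hFf2 g)
  refine ⟨⟨U, hUopen⟩, hwU, ?_⟩
  apply wb_intro hcnt
  intro C hCc hCd hCV
  by_contra hno
  push_neg at hno
  have hz : ∀ n, ∃ x, x ∈ C n ∧ x ∈ U := by
    intro n
    obtain ⟨x, hx1, hx2⟩ := hno n
    exact ⟨x, hx1, hx2⟩
  choose z hzC hzU using hz
  have hCmono : ∀ m n, m ≤ n → C n ⊆ C m := fun m n h => antitone_nat_of_succ_le hCd h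
  -- final contradiction engine
  have blow : ∀ D : Set X, DirOn (rS (X := X)) D → ∀ s, IsLubR (rS (X := X)) D s →
      s ∈ ⋂ n, C n → (∀ d ∈ D, d ∈ U) → False := by
    intro D hD s hs hsC hDU
    have hsV : s ∈ UpS (rS (X := X)) (G : Set X) := by
      rw [← hGeq]
      exact hCV hsC
    obtain ⟨g, hg, hgs⟩ := hsV
    obtain ⟨d, hd, hdF⟩ := hFf1 ⟨g, hg⟩ D hD s hs ⟨g, rfl, hgs⟩
    have hmem := hDU d hd
    rw [hUdef] at hmem
    exact (mem_iInter.1 hmem ⟨g, hg⟩) hdF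
  haveI hTrans1 : IsTrans X (rS (X := X)) := ⟨fun _ _ _ h1 h2 => rS_trans h1 h2⟩
  haveI hTransEq : IsTrans X (Eq : X → X → Prop) := ⟨fun _ _ _ h1 h2 => h1.trans h2⟩
  obtain ⟨g₁, hg₁⟩ := exists_increasing_or_nonincreasing_subseq (Eq : X → X → Prop) z
  rcases hg₁ with heq | hneq
  · -- constant value case
    set x₀ := z (g₁ 0) with hx₀
    have hx₀C : x₀ ∈ ⋂ n, C n := by
      apply mem_iInter.2
      intro m
      have h2 : x₀ = z (g₁ (m + 1)) := heq 0 (m + 1) (Nat.succ_pos m)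
      rw [h2]
      exact hCmono m (g₁ (m + 1))
        (le_trans (Nat.le_succ m) (g₁.strictMono.le_apply)) (hzC _)
    exact blow {x₀} (dirOn_singleton x₀) x₀ (isLubR_singleton x₀) hx₀C
      (fun d hd => by rw [mem_singleton_iff] at hd; rw [hd]; exact hzU _)
  · -- pairwise distinct subsequence
    set y : ℕ → X := fun n => z (g₁ n) with hydef
    have hyCU : ∀ (ψ : ℕ → ℕ), StrictMono ψ →
        (∀ n, y (ψ n) ∈ C n) ∧ (∀ n, y (ψ n) ∈ U) := by
      intro ψ hψ
      constructor
      · intro n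
        have h1 : z (g₁ (ψ n)) ∈ C (g₁ (ψ n)) := hzC _
        exact hCmono n _ (le_trans hψ.le_apply (g₁.strictMono.le_apply)) h1
      · intro n
        exact hzU _
    obtain ⟨g₂, hg₂⟩ := exists_increasing_or_nonincreasing_subseq (rS (X := X)) y
    rcases hg₂ with hinc | hninc
    · -- increasing chain case
      set c : ℕ → X := fun n => y (g₂ n) with hcdef
      have hcC : ∀ n, c n ∈ C n := (hyCU g₂ g₂.strictMono).1
      have hcU : ∀ n, c n ∈ U := (hyCU g₂ g₂.strictMono).2
      have hDdir : DirOn (rS (X := X)) (range c) := by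
        refine ⟨⟨c 0, mem_range_self 0⟩, ?_⟩
        rintro a ⟨i, rfl⟩ b ⟨j, rfl⟩
        refine ⟨c (max i j + 1), mem_range_self _, ?_, ?_⟩
        · exact hinc i _ (Nat.lt_succ_of_le (le_max_left i j))
        · exact hinc j _ (Nat.lt_succ_of_le (le_max_right i j))
      obtain ⟨s, hs⟩ := hdcpo _ hDdir
      refine blow _ hDdir s hs ?_ ?_
      · apply mem_iInter.2
        intro m
        exact (hCc m).rS_mem (hcC m) (hs.1 (c m) (mem_range_self m))
      · rintro d ⟨i, rfl⟩
        exact hcU i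
    · -- second Ramsey with the flipped relation
      haveI : IsTrans X (fun a b : X => rS b a) := ⟨fun _ _ _ h1 h2 => rS_trans h2 h1⟩
      set y₂ : ℕ → X := fun n => y (g₂ n) with hy₂def
      obtain ⟨g₃, hg₃⟩ := exists_increasing_or_nonincreasing_subseq (fun a b : X => rS b a) y₂
      set y₃ : ℕ → X := fun n => y₂ (g₃ n) with hy₃def
      have hψ : StrictMono (fun n => g₂ (g₃ n)) := g₂.strictMono.comp g₃.strictMono
      have hy₃C : ∀ n, y₃ n ∈ C n := (hyCU _ hψ).1
      have hy₃U : ∀ n, y₃ n ∈ U := (hyCU _ hψ).2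
      rcases hg₃ with hdec | hnr
      · -- decreasing (filtered) case
        have hdec' : ∀ i j, i ≤ j → rS (y₃ j) (y₃ i) := by
          intro i j hij
          rcases lt_or_eq_of_le hij with h | h
          · exact hdec i j h
          · rw [h]; exact rS_refl _
        set T : ℕ → Set X := fun j => y₃ '' {n | j ≤ n} with hTdef
        have hTne : ∀ j, (T j).Nonempty := fun j => ⟨y₃ j, j, le_refl j, rfl⟩
        have hTfil : ∀ j, ∀ a ∈ T j, ∀ b ∈ T j, ∃ d ∈ T j, rS d a ∧ rS d b := by
          rintro j _ ⟨n₁, hn₁, rfl⟩ _ ⟨n₂, hn₂, rfl⟩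
          refine ⟨y₃ (max n₁ n₂), ⟨max n₁ n₂, (le_trans (show j ≤ n₁ from hn₁) (le_max_left _ _) : j ≤ max n₁ n₂), rfl⟩, ?_, ?_⟩
          · exact hdec' n₁ _ (le_max_left _ _)
          · exact hdec' n₂ _ (le_max_right _ _)
        have hgen : ∀ j : ℕ, ∃ g : X, closure ({g} : Set X) = closure (T j) := by
          intro j
          exact exists_generic (isIrreducible_closure_of_filtered (hTne j) (hTfil j))
            isClosed_closure
        choose gg hgg using hgen
        have hTmono : ∀ i j, i ≤ j → T j ⊆ T i := by
          rintro i j hij _ ⟨n, hn, rfl⟩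
          exact ⟨n, le_trans hij hn, rfl⟩
        have hggmono : ∀ i j, i ≤ j → rS (gg i) (gg j) := by
          intro i j hij
          have h1 : gg j ∈ closure (T j) := by
            rw [← hgg j]; exact subset_closure rfl
          have h2 : gg j ∈ closure (T i) := closure_mono (hTmono i j hij) h1
          rw [← hgg i] at h2
          exact h2
        have hggU : ∀ j, gg j ∈ U := by
          intro j
          have h1 : y₃ j ∈ closure ({gg j} : Set X) := by
            rw [hgg j]
            exact subset_closure ⟨j, le_refl j, rfl⟩
          exact hUopen.rS_mem h1 (hy₃U j)
        have hDdir : DirOn (rS (X := X)) (range gg) := by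
          refine ⟨⟨gg 0, mem_range_self 0⟩, ?_⟩
          rintro a ⟨i, rfl⟩ b ⟨j, rfl⟩
          exact ⟨gg (max i j), mem_range_self _, hggmono i _ (le_max_left _ _),
            hggmono j _ (le_max_right _ _)⟩
        obtain ⟨s, hs⟩ := hdcpo _ hDdir
        refine blow _ hDdir s hs ?_ ?_
        · apply mem_iInter.2
          intro m
          have hTC : T m ⊆ C m := by
            rintro _ ⟨n, hn, rfl⟩
            exact hCmono m n hn (hy₃C n)
          have hggC : gg m ∈ C m := by
            have h1 : gg m ∈ closure (T m) := by
              rw [← hgg m]; exact subset_closure rfl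
            exact ((hCc m).closure_subset_iff.2 hTC) h1
          exact (hCc m).rS_mem hggC (hs.1 (gg m) (mem_range_self m))
        · rintro d ⟨i, rfl⟩
          exact hggU i
      · -- antichain case: use the engine
        have hanti : ∀ i j : ℕ, i ≠ j → ¬ rS (y₃ i) (y₃ j) := by
          intro i j hij
          rcases Nat.lt_or_ge i j with h | h
          · -- i < j : no forward relation, inherited from hninc
            have := hninc (g₃ i) (g₃ j) (g₃.strictMono h)
            exact this
          · have hj : j < i := by omega
            exact hnr j i hj
        obtain ⟨gstar, J, hJinf, hbelow, hcl⟩ := engine hcnt y₃ hanti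
        have hgU : gstar ∈ U := by
          obtain ⟨i, hi⟩ := hJinf.nonempty
          exact hUopen.rS_mem (hbelow i hi) (hy₃U i)
        have hgC : gstar ∈ ⋂ n, C n := by
          apply mem_iInter.2
          intro m
          have himg : y₃ '' {i | i ∈ J ∧ m ≤ i} ⊆ C m := by
            rintro _ ⟨i, ⟨_, hmi⟩, rfl⟩
            exact hCmono m i hmi (hy₃C i)
          exact ((hCc m).closure_subset_iff.2 himg) (hcl m)
        exact blow {gstar} (dirOn_singleton gstar) gstar (isLubR_singleton gstar) hgC
          (fun d hd => by rw [mem_singleton_iff] at hd; rw [hd]; exact hgU)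

lemma dirB (hcnt : {U : Set X | IsOpen U}.Countable)
    (hdcpo : DcpoRel (rS (X := X))) (hq : QuasicontinuousRel (rS (X := X))) :
    ContinuousRel (lE (X := X)) := by
  intro V
  refine ⟨dirOn_wbset V, ?_, ?_⟩
  · intro d hd
    exact wb_subset hd
  · intro u hu
    intro x hxV
    obtain ⟨U, hxU, hUwb⟩ := exists_wb_nbhd hcnt hdcpo hq V hxV
    exact hu U hUwb hxU

end DirB
/-- If `X` is sober with countable open set lattice and `(X, ≥)` is
a dcpo, then `O(X)` is a continuous lattice iff `(X, ≥)` is quasicontinuous. -/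
theorem stmt9 {X : Type*} [TopologicalSpace X] [T0Space X] [QuasiSober X]
    (hcnt : {U : Set X | IsOpen U}.Countable)
    (hdcpo : DcpoRel (fun x y : X => sle y x)) :
    ContinuousRel (fun U V : {U : Set X // IsOpen U} => U.1 ⊆ V.1) ↔
      QuasicontinuousRel (fun x y : X => sle y x) := by
  constructor
  · intro h
    exact dirA hcnt h
  · intro h
    exact dirB hcnt hdcpo h
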